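/- Let G be a simple graph with girth 5 and diameter 2. Then every path in G with 4 vertices (a path of length 3) is a subgraph of exactly one 5-cycle of G. -/

import Mathlib

open SimpleGraph


lemma girth_five_le {V : Type*} {G : SimpleGraph V} {a : V} (hg : G.girth = 5)
    (w : G.Walk a a) (hw : w.IsCycle) : 5 ≤ w.length := by
  have h5 : G.egirth = 5 := by
    have hne : G.egirth ≠ ⊤ := by
      intro h; rw [girth, h] at hg; simp at hg
    have := (ENat.coe_toNat hne).symm
    rw [girth] at hg; rw [this, hg]; rfl
  have := le_egirth.mp h5.ge a w hw
  exact_mod_cast this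

lemma no_tri {V : Type*} {G : SimpleGraph V} (hg : G.girth = 5) {x y z : V}
    (h1 : G.Adj x y) (h2 : G.Adj y z) (h3 : G.Adj z x) : False := by
  have hc : (Walk.cons h1 (Walk.cons h2 (Walk.cons h3 Walk.nil))).IsCycle := by
    have := h1.ne; have := h2.ne; have := h3.ne
    simp_all [Walk.isCycle_def, Walk.isTrail_def, Sym2.eq_iff]
    tauto
  have := girth_five_le hg _ hc
  simp [Walk.length_cons] at this

lemma no_quad {V : Type*} {G : SimpleGraph V} (hg : G.girth = 5) {w x y z : V}
    (hwy : w ≠ y) (hxz : x ≠ z)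
    (h1 : G.Adj w x) (h2 : G.Adj x y) (h3 : G.Adj y z) (h4 : G.Adj z w) : False := by
  have hc : (Walk.cons h1 (Walk.cons h2 (Walk.cons h3 (Walk.cons h4 Walk.nil)))).IsCycle := by
    have := h1.ne; have := h2.ne; have := h3.ne; have := h4.ne
    simp_all [Walk.isCycle_def, Walk.isTrail_def, Sym2.eq_iff]
    tauto
  have := girth_five_le hg _ hc
  simp [Walk.length_cons] at this


lemma cycle_determined {V : Type*} [DecidableEq V] {G : SimpleGraph V}
    {a v2 v3 b x : V}
    (hav2 : a ≠ v2) (hav3 : a ≠ v3) (hab : a ≠ b) (hv23 : v2 ≠ v3) (hv2b : v2 ≠ b)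
    (hv3b : v3 ≠ b)
    (huniq : ∀ y : V, G.Adj a y → G.Adj y b → y = x)
    (c : G.Walk v2 v2) (hc : c.IsCycle) (h5 : c.length = 5)
    (hm1 : s(a,v2) ∈ c.edges) (hm2 : s(v2,v3) ∈ c.edges) (hm3 : s(v3,b) ∈ c.edges) :
    c.edges.toFinset = {s(a,v2), s(v2,v3), s(v3,b), s(b,x), s(x,a)} := by
  cases c with
  | nil => simp at h5
  | cons e1 c =>
  rename_i x1
  cases c with
  | nil => simp at h5
  | cons e2 c =>
  rename_i x2
  cases c with
  | nil => simp [Walk.length_cons] at h5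
  | cons e3 c =>
  rename_i x3
  cases c with
  | nil => simp [Walk.length_cons] at h5
  | cons e4 c =>
  rename_i x4
  cases c with
  | nil => simp [Walk.length_cons] at h5
  | cons e5 c =>
  cases c with
  | cons e6 c => simp [Walk.length_cons] at h5
  | nil =>
  -- nodup of support tail
  have hnd := hc.support_nodup
  simp [Walk.support_cons] at hnd
  obtain ⟨⟨h12, h13, h14, h1v⟩, ⟨h23, h24, h2v⟩, ⟨h34, h3v⟩, h4v⟩ := hnd
  simp only [Walk.edges_cons, Walk.edges_nil, List.mem_cons, List.not_mem_nil, or_false,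
    Sym2.eq_iff] at hm1 hm2 hm3
  have hkey : v3 = x1 ∨ v3 = x4 := by
    rcases hm2 with (⟨-,h⟩|⟨h,-⟩)|(⟨h,-⟩|⟨h,-⟩)|(⟨h,-⟩|⟨h,-⟩)|(⟨h,-⟩|⟨h,-⟩)|⟨h,-⟩|⟨-,h⟩
    · exact Or.inl h
    · exact absurd h.symm h1v
    · exact absurd h.symm h1v
    · exact absurd h.symm h2v
    · exact absurd h.symm h2v
    · exact absurd h.symm h3v
    · exact absurd h.symm h3v
    · exact absurd h.symm h4v
    · exact absurd h.symm h4v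
    · exact Or.inr h
  clear hm2
  rcases hkey with rfl | rfl
  · -- v3 = x1 : cycle is v2, v3, x2, x3, x4
    have ha4 : a = x4 := by
      rcases hm1 with (⟨h,-⟩|⟨h,-⟩)|(⟨h,-⟩|⟨-,h⟩)|(⟨-,h⟩|⟨-,h⟩)|(⟨-,h⟩|⟨-,h⟩)|⟨h,-⟩|⟨h,-⟩
      · exact absurd h hav2
      · exact absurd h hav3
      · exact absurd h hav3
      · exact absurd h hv23
      · exact absurd h.symm h3v
      · exact absurd h.symm h2v
      · exact absurd h.symm h4v
      · exact absurd h.symm h3v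
      · exact h
      · exact absurd h hav2
    subst ha4
    have hb2 : b = x2 := by
      rcases hm3 with (⟨h,-⟩|⟨-,h⟩)|(⟨-,h⟩|⟨h,-⟩)|(⟨h,-⟩|⟨h,-⟩)|(⟨h,-⟩|⟨h,-⟩)|⟨h,-⟩|⟨h,-⟩
      · exact absurd h.symm hv23
      · exact absurd h.symm hv2b
      · exact h
      · exact absurd h h12
      · exact absurd h h12
      · exact absurd h h13
      · exact absurd h h13
      · exact absurd h.symm hav3
      · exact absurd h.symm hav3
      · exact absurd h.symm hv23
    subst hb2
    have hx3 : x3 = x := huniq x3 e4.symm e3.symm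
    subst hx3
    ext e
    simp only [Walk.edges_cons, Walk.edges_nil, List.toFinset_cons, List.toFinset_nil,
      Finset.mem_insert, Finset.mem_singleton, LawfulSingleton.insert_empty_eq]
    constructor <;> intro h <;> rcases h with h|h|h|h|h <;>
      simp [h, Sym2.eq_swap] <;> tauto
  · -- v3 = x4 : cycle is v2, x1, x2, x3, v3
    have ha1 : a = x1 := by
      rcases hm1 with (⟨h,-⟩|⟨h,-⟩)|(⟨h,-⟩|⟨-,h⟩)|(⟨-,h⟩|⟨-,h⟩)|(⟨-,h⟩|⟨h,-⟩)|⟨h,-⟩|⟨h,-⟩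
      · exact absurd h hav2
      · exact h
      · exact h
      · exact absurd h.symm h1v
      · exact absurd h.symm h3v
      · exact absurd h.symm h2v
      · exact absurd h hv23
      · exact absurd h hav3
      · exact absurd h hav3
      · exact absurd h hav2
    subst ha1
    have hb3 : b = x3 := by
      rcases hm3 with (⟨h,-⟩|⟨-,h⟩)|(⟨h,-⟩|⟨-,h⟩)|(⟨h,-⟩|⟨h,-⟩)|(⟨h,-⟩|⟨-,h⟩)|⟨-,h⟩|⟨h,-⟩
      · exact absurd h.symm hv23
      · exact absurd h.symm hv2b
      · exact absurd h.symm hav3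
      · exact absurd h.symm hab
      · exact absurd h.symm h24
      · exact absurd h.symm h34
      · exact absurd h.symm h34
      · exact h
      · exact absurd h.symm hv2b
      · exact absurd h.symm hv23
    subst hb3
    have hx2 : x2 = x := huniq x2 e2 e3
    subst hx2
    ext e
    simp only [Walk.edges_cons, Walk.edges_nil, List.toFinset_cons, List.toFinset_nil,
      Finset.mem_insert, Finset.mem_singleton, LawfulSingleton.insert_empty_eq]
    constructor <;> intro h <;> rcases h with h|h|h|h|h <;>
      simp [h, Sym2.eq_swap] <;> tauto

/-- In a graph of girth 5 and diameter 2, every path on 4 vertices (a path of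
length 3) is a subgraph of exactly one 5-cycle, where cycles are identified with
their edge sets (so rotations and reflections count once). -/
theorem path_length_three_in_unique_five_cycle {V : Type u} [DecidableEq V]
    (G : SimpleGraph V) (hgirth : G.girth = 5) (hdiam : G.diam = 2)
    {a b : V} (p : G.Walk a b) (hp : p.IsPath) (hlen : p.length = 3) :
    ∃! s : Finset (Sym2 V),
      (∃ (w : V) (c : G.Walk w w), c.IsCycle ∧ c.length = 5 ∧ c.edges.toFinset = s) ∧
      p.edges.toFinset ⊆ s := by
  cases p with
  | nil => simp at hlen
  | cons h1 q =>
    rename_i v2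
    cases q with
    | nil => simp at hlen
    | cons h2 r =>
      rename_i v3
      cases r with
      | nil => simp [Walk.length_cons] at hlen
      | cons h3 t =>
        rename_i v4
        cases t with
        | cons h4 u => simp [Walk.length_cons] at hlen
        | nil =>
          clear hlen
          -- h1 : G.Adj a v2, h2 : G.Adj v2 v3, h3 : G.Adj v3 b
          have hsup := hp.support_nodup
          simp [Walk.support_cons] at hsup
          obtain ⟨⟨hav2, hav3, hab⟩, ⟨hv23, hv2b⟩, hv3b⟩ := hsup
          -- a and b are not adjacent
          have hnadj : ¬ G.Adj a b := fun h =>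
            no_quad hgirth hav3 (fun hh => hv2b hh) h1 h2 h3 h.symm
          -- distance from a to b is 2; find common neighbor x
          have hreach : G.Reachable a b := ⟨Walk.cons h1 (Walk.cons h2 (Walk.cons h3 Walk.nil))⟩
          have hd2 : G.dist a b = 2 := by
            have hle : G.dist a b ≤ 2 := hdiam ▸ dist_le_diam (by
              apply ediam_ne_top_of_diam_ne_zero; omega)
            have h0 : G.dist a b ≠ 0 := dist_ne_zero_iff_ne_and_reachable.mpr ⟨hab, hreach⟩
            have h1' : G.dist a b ≠ 1 := fun h => hnadj (dist_eq_one_iff_adj.mp h)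
            omega
          obtain ⟨w2, hw2⟩ := hreach.exists_walk_length_eq_dist
          rw [hd2] at hw2
          obtain ⟨x, exa, w3, rfl⟩ : ∃ (x : V) (h : G.Adj a x) (w3 : G.Walk x b),
              w2 = Walk.cons h w3 := by
            cases w2 with
            | nil => simp at hw2
            | cons h q => exact ⟨_, h, q, rfl⟩
          have hw3 : w3.length = 1 := by simpa using hw2
          have exb : G.Adj x b := by
            cases w3 with
            | nil => simp at hw3
            | cons h q =>
              cases q with
              | nil => exact h
              | cons h' q' => simp [Walk.length_cons] at hw3
          clear hw3 hw2
          -- x is the unique common neighbor of a and b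
          have huniq : ∀ y : V, G.Adj a y → G.Adj y b → y = x := by
            intro y hy1 hy2
            by_contra hyx
            exact no_quad hgirth hab hyx hy1 hy2 exb.symm exa.symm
          -- x is distinct from a, v2, v3, b
          have hxa : x ≠ a := exa.ne'
          have hxb : x ≠ b := exb.ne
          have hxv2 : x ≠ v2 := fun h => no_tri hgirth h2 h3 (h ▸ exb).symm
          have hxv3 : x ≠ v3 := fun h => no_tri hgirth h1 h2 (h ▸ exa).symm
          -- the candidate 5-cycle
          refine ⟨{s(a,v2), s(v2,v3), s(v3,b), s(b,x), s(x,a)}, ⟨⟨a,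
            Walk.cons h1 (Walk.cons h2 (Walk.cons h3 (Walk.cons exb.symm
              (Walk.cons exa.symm Walk.nil)))), ?_, rfl, ?_⟩, ?_⟩, ?_⟩
          · simp_all [Walk.isCycle_def, Walk.isTrail_def, Sym2.eq_iff]
            tauto
          · simp [Walk.edges_cons]
          · intro e he
            simp [Walk.edges_cons] at he
            simp only [Finset.mem_insert, Finset.mem_singleton]
            tauto
          · rintro s ⟨⟨w, c, hc, hc5, rfl⟩, hsub⟩
            have hm1 : s(a,v2) ∈ c.edges := List.mem_toFinset.mp (hsub (by simp))
            have hm2 : s(v2,v3) ∈ c.edges := List.mem_toFinset.mp (hsub (by simp))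
            have hm3 : s(v3,b) ∈ c.edges := List.mem_toFinset.mp (hsub (by simp))
            have hv2s : v2 ∈ c.support := c.fst_mem_support_of_mem_edges hm2
            have hrot := c.rotate_edges v2 hv2s
            have hfin : (c.rotate v2 hv2s).edges.toFinset = c.edges.toFinset := by
              ext e; simp [List.mem_toFinset, hrot.perm.mem_iff]
            have hlenr : (c.rotate v2 hv2s).length = 5 := by
              rw [← Walk.length_edges, hrot.perm.length_eq, Walk.length_edges, hc5]
            have hres := cycle_determined hav2 hav3 hab hv23 hv2b hv3b huniq
              (c.rotate v2 hv2s) (hc.rotate hv2s) hlenr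
              (hrot.perm.mem_iff.mpr hm1) (hrot.perm.mem_iff.mpr hm2)
              (hrot.perm.mem_iff.mpr hm3)
            rw [← hfin]
            exact hres
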